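/- arXiv:2302.09374 — 2 statements merged into one kernel-verified Lean document; each statement's English description precedes it below -/
import Mathlib

section
/- Formal first-order Chapman–Enskog expansion: if p = F(A) + τ_r·p₁ + O(τ_r²) is substituted into ∂_t p + E_0 G(A) ∂_x(Au) = −(1/τ_r)(p − F(A)), and the leading-order relation ∂_t F(A) = −E_∞ G(A) ∂_x(Au) holds (from the continuity equation and F(A) = p_0 + (E_∞/W)(α^m − α^n)), then p₁ = (E_∞ − E_0)·G(A)·∂_x(Au), yielding the second-order accurate constitutive law p = F(A) − τ_r(E_0 − E_∞)·G(A)·∂_x(Au) + O(τ_r²). -/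
/-- Algebraic core of the first-order Chapman–Enskog expansion of the SLS
constitutive law: the first-order correction is
p₁ = (E_∞ − E_0) G(A) ∂_x(Au). Here `pt` denotes ∂_t p, `dAu` denotes
∂_x(Au), `G` denotes G(A) and `F` denotes F(A). -/
theorem chapman_enskog_first_order (E0 Einf τr G F p pt dAu p1 : ℝ)
    (hE : Einf < E0) (hEinf : 0 < Einf) (hτ : 0 < τr)
    (hexp : p = F + τr * p1)
    (hpde : pt + E0 * G * dAu = -(1 / τr) * (p - F))
    (hlead : pt = -(Einf * G * dAu)) :
    p1 = (Einf - E0) * G * dAu ∧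
    p = F - τr * (E0 - Einf) * G * dAu := by
  have h1 : p1 = (Einf - E0) * G * dAu := by
    have hne : τr ≠ 0 := ne_of_gt hτ
    have := hpde
    rw [hexp, hlead] at this
    field_simp at this
    nlinarith [this]
  exact ⟨h1, by rw [hexp, h1]; ring⟩
end

section
/- Well-balanced property (algebraic core): for the IMEX stage equations with internal stages A⁽ᵏ⁾, (Au)⁽ᵏ⁾, p⁽ᵏ⁾, if the initial data satisfy ∂_x(Au)ⁿ = 0, ρ∂_x(Au²)ⁿ + Aⁿ∂_x pⁿ = 0, and pⁿ − F(Aⁿ) + τ_r E_0 G(Aⁿ)∂_x(Au)ⁿ = 0, then A⁽ᵏ⁾ = Aⁿ, (Au)⁽ᵏ⁾ = (Au)ⁿ, p⁽ᵏ⁾ = pⁿ for all stages k, and hence Aⁿ⁺¹ = Aⁿ, (Au)ⁿ⁺¹ = (Au)ⁿ, pⁿ⁺¹ = pⁿ. -/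
/-- Well-balanced property of the partitioned IMEX Runge–Kutta scheme
(algebraic core): stationary initial data are preserved by all the internal
stages and by the final update. The spatial derivative is an abstract linear
operator `Dx` on the space of fields `ℝ → ℝ`. -/
theorem imex_well_balanced (s : ℕ)
    (at_ : Fin s → Fin s → ℝ) (a : Fin s → Fin s → ℝ)
    (bt : Fin s → ℝ) (b : Fin s → ℝ)
    (Δt τr ρ E0 : ℝ)
    (hΔt : 0 < Δt) (hτr : 0 < τr) (hρ : 0 < ρ) (hE0 : 0 < E0)
    (hdiag : ∀ k, 0 ≤ a k k)
    (Dx : (ℝ → ℝ) →ₗ[ℝ] (ℝ → ℝ))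
    (G F : ℝ → ℝ)
    (An Qn Pn : ℝ → ℝ)
    (A Q P : Fin s → ℝ → ℝ)
    (hA : ∀ k, A k = An - Δt • ∑ j, if j < k then at_ k j • Dx (Q j) else 0)
    (hQ : ∀ k, Q k = Qn - Δt • ∑ j, if j < k then
        at_ k j • (Dx (Q j * Q j / A j) + ρ⁻¹ • (A j * Dx (P j))) else 0)
    (hP : ∀ k, P k = Pn - Δt • ∑ j, if j ≤ k then
        a k j • (E0 • ((G ∘ A j) * Dx (Q j)) + τr⁻¹ • (P j - F ∘ A j)) else 0)
    (stat1 : Dx Qn = 0)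
    (stat2 : ρ • Dx (Qn * Qn / An) + An * Dx Pn = 0)
    (stat3 : Pn - F ∘ An + (τr * E0) • ((G ∘ An) * Dx Qn) = 0)
    (An1 Qn1 Pn1 : ℝ → ℝ)
    (hAn1 : An1 = An - Δt • ∑ k, bt k • Dx (Q k))
    (hQn1 : Qn1 = Qn - Δt • ∑ k,
        bt k • (Dx (Q k * Q k / A k) + ρ⁻¹ • (A k * Dx (P k))))
    (hPn1 : Pn1 = Pn - Δt • ∑ k,
        b k • (E0 • ((G ∘ A k) * Dx (Q k)) + τr⁻¹ • (P k - F ∘ A k))) :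
    (∀ k, A k = An ∧ Q k = Qn ∧ P k = Pn) ∧
      An1 = An ∧ Qn1 = Qn ∧ Pn1 = Pn := by
  -- Stationary pressure: `Pn = F ∘ An`.
  have hPF : Pn = F ∘ An := by
    have h := stat3
    rw [stat1, mul_zero, smul_zero, add_zero, sub_eq_zero] at h
    exact h
  -- Stationary momentum balance in the form used by the `Q`-stages.
  have hstat2' : Dx (Qn * Qn / An) + ρ⁻¹ • (An * Dx Pn) = 0 := by
    have h := congrArg (fun z => ρ⁻¹ • z) stat2
    simpa [smul_add, smul_smul, inv_mul_cancel₀ hρ.ne'] using h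
  -- All internal stages are stationary (strong induction on the stage index).
  have key : ∀ n : ℕ, ∀ k : Fin s, (k : ℕ) = n →
      (A k = An ∧ Q k = Qn ∧ P k = Pn) := by
    intro n
    induction n using Nat.strong_induction_on with
    | _ n ih =>
      intro k hk
      have IH : ∀ j : Fin s, j < k → (A j = An ∧ Q j = Qn ∧ P j = Pn) := by
        intro j hj
        have : (j : ℕ) < n := hk ▸ hj
        exact ih (j : ℕ) this j rfl
      -- A-stage
      have hAk : A k = An := by
        rw [hA k]
        have : (∑ j, if j < k then at_ k j • Dx (Q j) else 0)
            = (0 : ℝ → ℝ) := by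
          apply Finset.sum_eq_zero
          intro j _
          split_ifs with h
          · rw [(IH j h).2.1, stat1, smul_zero]
          · rfl
        rw [this, smul_zero, sub_zero]
      -- Q-stage
      have hQk : Q k = Qn := by
        rw [hQ k]
        have : (∑ j, if j < k then
            at_ k j • (Dx (Q j * Q j / A j) + ρ⁻¹ • (A j * Dx (P j))) else 0)
            = (0 : ℝ → ℝ) := by
          apply Finset.sum_eq_zero
          intro j _
          split_ifs with h
          · rw [(IH j h).1, (IH j h).2.1, (IH j h).2.2, hstat2', smul_zero]
          · rfl
        rw [this, smul_zero, sub_zero]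
      -- P-stage (implicit)
      have hPk : P k = Pn := by
        have hsum : (∑ j, if j ≤ k then
            a k j • (E0 • ((G ∘ A j) * Dx (Q j)) + τr⁻¹ • (P j - F ∘ A j)) else 0)
            = (a k k * τr⁻¹) • (P k - Pn) := by
          have : ∀ j : Fin s,
              (if j ≤ k then
                a k j • (E0 • ((G ∘ A j) * Dx (Q j)) + τr⁻¹ • (P j - F ∘ A j)) else 0)
              = (if j = k then (a k k * τr⁻¹) • (P k - Pn) else 0) := by
            intro j
            by_cases hjk : j ≤ k
            · rcases lt_or_eq_of_le hjk with h | h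
              · rw [if_pos hjk, if_neg (ne_of_lt h),
                  (IH j h).1, (IH j h).2.1, (IH j h).2.2, stat1, mul_zero,
                  smul_zero, zero_add, ← hPF, sub_self, smul_zero, smul_zero]
              · subst h
                rw [if_pos hjk, if_pos rfl, hAk, hQk, stat1, mul_zero,
                  smul_zero, zero_add, smul_smul, hPF]
            · rw [if_neg hjk, if_neg (by rintro rfl; exact hjk le_rfl)]
          rw [Finset.sum_congr rfl (fun j _ => this j)]
          simp
        have heq := hP k
        rw [hsum, smul_smul] at heq
        have hD : (1 + Δt * (a k k * τr⁻¹)) • (P k - Pn) = 0 := by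
          calc (1 + Δt * (a k k * τr⁻¹)) • (P k - Pn)
              = P k - (Pn - (Δt * (a k k * τr⁻¹)) • (P k - Pn)) := by module
            _ = 0 := sub_eq_zero.mpr heq
        have hc : (1 + Δt * (a k k * τr⁻¹)) ≠ 0 := by
          have h0 : 0 ≤ Δt * (a k k * τr⁻¹) :=
            mul_nonneg hΔt.le (mul_nonneg (hdiag k) (inv_pos.mpr hτr).le)
          positivity
        exact sub_eq_zero.mp ((smul_eq_zero.mp hD).resolve_left hc)
      exact ⟨hAk, hQk, hPk⟩
  have key' : ∀ k, A k = An ∧ Q k = Qn ∧ P k = Pn := fun k => key k k rfl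
  refine ⟨key', ?_, ?_, ?_⟩
  · rw [hAn1]
    have : (∑ k, bt k • Dx (Q k)) = (0 : ℝ → ℝ) := by
      apply Finset.sum_eq_zero
      intro k _
      rw [(key' k).2.1, stat1, smul_zero]
    rw [this, smul_zero, sub_zero]
  · rw [hQn1]
    have : (∑ k, bt k • (Dx (Q k * Q k / A k) + ρ⁻¹ • (A k * Dx (P k))))
        = (0 : ℝ → ℝ) := by
      apply Finset.sum_eq_zero
      intro k _
      rw [(key' k).1, (key' k).2.1, (key' k).2.2, hstat2', smul_zero]
    rw [this, smul_zero, sub_zero]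
  · rw [hPn1]
    have : (∑ k, b k • (E0 • ((G ∘ A k) * Dx (Q k)) + τr⁻¹ • (P k - F ∘ A k)))
        = (0 : ℝ → ℝ) := by
      apply Finset.sum_eq_zero
      intro k _
      rw [(key' k).1, (key' k).2.1, (key' k).2.2, stat1, mul_zero, smul_zero,
        zero_add, ← hPF, sub_self, smul_zero, smul_zero]
    rw [this, smul_zero, sub_zero]
end
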